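/- The dual Fibonacci lattice L⁰ = {((n−mτ′)/√5, (mτ−n)/√5) : m,n ∈ ℤ} satisfies L⁰ + [0, τ/√5] × (−τ/√5, τ/√5) = ℝ²; that is, every point of ℝ² can be written as a lattice point of L⁰ plus a point of the box [0, τ/√5] × (−τ/√5, τ/√5), where τ = (1+√5)/2. -/

import Mathlib

noncomputable def tau : ℝ := (1 + Real.sqrt 5) / 2
noncomputable def tau' : ℝ := (1 - Real.sqrt 5) / 2

/-- The dual Fibonacci lattice satisfies
`L⁰ + [0, τ/√5] × (−τ/√5, τ/√5) = ℝ²`. -/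
theorem dual_fibonacci_lattice_covers (v : ℝ × ℝ) :
    ∃ m n : ℤ,
      v.1 - ((n : ℝ) - m * tau') / Real.sqrt 5 ∈ Set.Icc 0 (tau / Real.sqrt 5) ∧
      v.2 - ((m : ℝ) * tau - n) / Real.sqrt 5 ∈
        Set.Ioo (-(tau / Real.sqrt 5)) (tau / Real.sqrt 5) := by
  have hs : (0:ℝ) < Real.sqrt 5 := by positivity
  have hs1 : (1:ℝ) ≤ Real.sqrt 5 := by
    nlinarith [Real.sq_sqrt (by norm_num : (5:ℝ) ≥ 0), Real.sqrt_nonneg 5]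
  set s := Real.sqrt 5 with hsdef
  have htt : tau - tau' = s := by rw [tau, tau']; ring
  have ht1 : (1:ℝ) ≤ tau := by rw [tau]; linarith
  set x := v.1 * s with hx
  set y := v.2 * s with hy
  obtain ⟨m, hm1, hm2⟩ : ∃ m : ℤ, x + y - tau < m * s ∧ (m:ℝ) * s ≤ x + y + tau - 1 := by
    refine ⟨⌊(x + y + tau - 1)/s⌋, ?_, ?_⟩
    · have h := Int.sub_one_lt_floor ((x + y + tau - 1)/s)
      have h2 : ((x + y + tau - 1)/s - 1) * s = x + y + tau - 1 - s := by
        field_simp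
      have h2t : 2 * tau = 1 + s := by rw [tau]; ring
      have h3 := mul_lt_mul_of_pos_right h hs
      rw [h2] at h3
      linarith
    · have h := Int.floor_le ((x + y + tau - 1)/s)
      have h2 : ((x + y + tau - 1)/s) * s = x + y + tau - 1 := by field_simp
      nlinarith [h]
  obtain ⟨n, hn1, hn2⟩ : ∃ n : ℤ, (n:ℝ) ≤ x + m * tau' ∧ x + m * tau' - n < 1 :=
    ⟨⌊x + m * tau'⌋, Int.floor_le _, by linarith [Int.lt_floor_add_one (x + m * tau')]⟩
  have hv1 : v.1 = x / s := by field_simp; exact hx.symm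
  have hv2 : v.2 = y / s := by field_simp; exact hy.symm
  refine ⟨m, n, ⟨?_, ?_⟩, ?_, ?_⟩
  · rw [hv1, div_sub_div_same, le_div_iff₀ hs]
    linarith
  · rw [hv1, div_sub_div_same, div_le_div_iff₀ hs hs]
    nlinarith
  · rw [hv2, div_sub_div_same, ← neg_div, div_lt_div_iff₀ hs hs]
    have : (m:ℝ) * tau = m * s + m * tau' := by rw [← htt]; ring
    nlinarith
  · rw [hv2, div_sub_div_same, div_lt_div_iff₀ hs hs]
    have : (m:ℝ) * tau = m * s + m * tau' := by rw [← htt]; ring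
    nlinarith
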